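/- For every integer d ≥ 0, each of the ℚ-vector spaces Z_q[d] and Z_q°[d] is closed under multiplication of formal power series; in particular Z_q = Z_q[0] and Z_q° = Z_q°[0] are ℚ-subalgebras of ℚ[[q]]. -/

import Mathlib

open Finset

/-- The q-analogue ζ_q(s_1,…,s_l;Q_1,…,Q_l) ∈ ℚ[[q]], defined coefficientwise:
the coefficient of q^m is the (convergent, since each summand with n_1 > m
contributes 0 once Q_1 has no constant term) sum over strictly decreasing tuples
n_1 > ⋯ > n_l > 0 of the coefficient of q^m in
Q_1(q^{n_1})⋯Q_l(q^{n_l}) / ((1−q^{n_1})^{s_1}⋯(1−q^{n_l})^{s_l}). -/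
noncomputable def zetaQ (l : ℕ) (s : Fin l → ℕ) (Q : Fin l → Polynomial ℚ) : PowerSeries ℚ :=
  PowerSeries.mk fun m =>
    ∑' n : {n : Fin l → ℕ // StrictAnti n ∧ ∀ i, 0 < n i},
      PowerSeries.coeff (R := ℚ) m
        (∏ j, Polynomial.aeval (PowerSeries.X ^ (n.1 j)) (Q j) *
          ((1 - PowerSeries.X ^ (n.1 j))⁻¹) ^ (s j))

noncomputable def letter (s : ℕ) (Q : Polynomial ℚ) (k : ℕ) : PowerSeries ℚ :=
  Polynomial.aeval (PowerSeries.X ^ k) Q * ((1 - PowerSeries.X ^ k)⁻¹) ^ s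

lemma letter_mul (s s' : ℕ) (Q Q' : Polynomial ℚ) (k : ℕ) :
    letter s Q k * letter s' Q' k = letter (s + s') (Q * Q') k := by
  simp only [letter, map_mul, pow_add]; ring

lemma letter_one (k : ℕ) : letter 0 1 k = 1 := by
  simp [letter]

lemma X_pow_dvd_letter {s : ℕ} {Q : Polynomial ℚ} {k : ℕ} (hQ : Q.coeff 0 = 0) :
    (PowerSeries.X : PowerSeries ℚ) ^ k ∣ letter s Q k := by
  rcases Polynomial.X_dvd_iff.2 hQ with ⟨R, rfl⟩
  refine Dvd.dvd.mul_right ⟨Polynomial.aeval (PowerSeries.X ^ k) R, ?_⟩ _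
  rw [map_mul, Polynomial.aeval_X]

noncomputable def Zq (l : ℕ) (s : ℕ → ℕ) (Q : ℕ → Polynomial ℚ) : PowerSeries ℚ :=
  PowerSeries.mk fun m => ∑' n : {n : Fin l → ℕ // StrictAnti n ∧ ∀ i, 0 < n i},
    PowerSeries.coeff (R := ℚ) m (∏ j : Fin l, letter (s (j : ℕ)) (Q (j : ℕ)) (n.1 j))

noncomputable def extS (l : ℕ) (s : Fin l → ℕ) : ℕ → ℕ :=
  fun a => if h : a < l then s ⟨a, h⟩ else 1

noncomputable def extQ (l : ℕ) (Q : Fin l → Polynomial ℚ) : ℕ → Polynomial ℚ :=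
  fun a => if h : a < l then Q ⟨a, h⟩ else 0

lemma zetaQ_eq_Zq (l : ℕ) (s : Fin l → ℕ) (Q : Fin l → Polynomial ℚ) :
    zetaQ l s Q = Zq l (extS l s) (extQ l Q) := by
  refine PowerSeries.ext fun m => ?_
  rw [zetaQ, Zq, PowerSeries.coeff_mk, PowerSeries.coeff_mk]
  refine tsum_congr fun n => ?_
  congr 1
  refine Finset.prod_congr rfl fun j _ => ?_
  rw [letter, extS, extQ, dif_pos j.2, dif_pos j.2]

noncomputable def dE (S : Finset ℕ) (j : ℕ) : ℕ :=
  if h : j < S.card then S.orderEmbOfFin rfl ⟨S.card - 1 - j, by omega⟩ else 0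
noncomputable def rk (S : Finset ℕ) (x : ℕ) : ℕ := (S.filter (fun y => x < y)).card

section
variable {S : Finset ℕ}

lemma dE_mem {j : ℕ} (h : j < S.card) : dE S j ∈ S := by
  rw [dE, dif_pos h]; exact S.orderEmbOfFin_mem rfl _

lemma dE_lt_dE {i j : ℕ} (hij : i < j) (hj : j < S.card) : dE S j < dE S i := by
  rw [dE, dif_pos hj, dE, dif_pos (lt_trans hij hj)]
  exact (S.orderEmbOfFin rfl).strictMono (by simp only [Fin.mk_lt_mk]; omega)

lemma dE_injOn : Set.InjOn (dE S) (range S.card) := by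
  intro a ha b hb hab
  rcases lt_trichotomy a b with h | h | h
  · exact absurd hab (dE_lt_dE h (mem_range.1 hb)).ne'
  · exact h
  · exact absurd hab (dE_lt_dE h (mem_range.1 ha)).ne

lemma dE_image : (range S.card).image (dE S) = S := by
  apply eq_of_subset_of_card_le
  · intro x hx
    rcases mem_image.1 hx with ⟨j, hj, rfl⟩
    exact dE_mem (mem_range.1 hj)
  · rw [card_image_of_injOn dE_injOn, card_range]

/-- uniqueness: a strictly antitone tuple is the `dE` enumeration of its image. -/
lemma dE_eq {l : ℕ} {n : Fin l → ℕ} (hn : StrictAnti n) (j : Fin l) :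
    dE (image n univ) (j : ℕ) = n j := by
  have hcard : (image n univ).card = l := by
    rw [card_image_of_injective _ hn.injective, card_univ, Fintype.card_fin]
  have hj : (j : ℕ) < (image n univ).card := by rw [hcard]; exact j.2
  rw [dE, dif_pos hj]
  have hmono : StrictMono (fun i : Fin (image n univ).card => n ⟨l - 1 - (i : ℕ), by omega⟩) := by
    intro a b hab
    exact hn (by simp only [Fin.mk_lt_mk]; omega)
  have := Finset.orderEmbOfFin_unique (s := image n univ) (k := (image n univ).card) rfl
    (f := fun i : Fin (image n univ).card => n ⟨l - 1 - (i : ℕ), by omega⟩)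
    (fun i => mem_image.2 ⟨_, mem_univ _, rfl⟩) hmono
  have h2 := congrFun this.symm ⟨(image n univ).card - 1 - (j : ℕ), by omega⟩
  rw [h2]
  congr 1
  ext
  simp only []
  omega

lemma rk_dE {j : ℕ} (h : j < S.card) : rk S (dE S j) = j := by
  have : S.filter (fun y => dE S j < y) = (range j).image (dE S) := by
    ext x
    simp only [mem_filter, mem_image, mem_range]
    constructor
    · rintro ⟨hxS, hlt⟩
      have := dE_image (S := S)
      rw [← this] at hxS
      rcases mem_image.1 hxS with ⟨i, hi, rfl⟩
      refine ⟨i, ?_, rfl⟩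
      by_contra hij
      push_neg at hij
      rcases eq_or_lt_of_le hij with rfl | hij'
      · exact lt_irrefl _ hlt
      · exact absurd (dE_lt_dE hij' (mem_range.1 hi)) (by omega)
    · rintro ⟨i, hij, rfl⟩
      exact ⟨dE_mem (lt_trans hij h), dE_lt_dE hij h⟩
  rw [rk, this, card_image_of_injOn (dE_injOn.mono (by intro x hx; simp at hx ⊢; omega)),
    card_range]

lemma rk_lt_card {x : ℕ} (hx : x ∈ S) : rk S x < S.card :=
  card_lt_card (by
    constructor
    · exact filter_subset _ _
    · intro hsub
      exact absurd (mem_filter.1 (hsub hx)).2 (lt_irrefl x))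

lemma dE_rk {x : ℕ} (hx : x ∈ S) : dE S (rk S x) = x := by
  rcases mem_image.1 (show x ∈ (range S.card).image (dE S) by rw [dE_image]; exact hx)
    with ⟨j, hj, rfl⟩
  rw [rk_dE (mem_range.1 hj)]

/-- rank in a subset via counting flags among larger merged positions. -/
lemma rk_subset {T : Finset ℕ} (hST : S ⊆ T) {k : ℕ} (hk : k < T.card) :
    rk S (dE T k) = ((range k).filter (fun i => dE T i ∈ S)).card := by
  have key : S.filter (fun y => dE T k < y) = ((range k).filter (fun i => dE T i ∈ S)).image (dE T) := by
    ext x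
    simp only [mem_filter, mem_image, mem_range]
    constructor
    · rintro ⟨hxS, hlt⟩
      rcases mem_image.1 (show x ∈ (range T.card).image (dE T) by rw [dE_image]; exact hST hxS)
        with ⟨i, hi, rfl⟩
      refine ⟨i, ⟨?_, hxS⟩, rfl⟩
      by_contra hik
      push_neg at hik
      rcases eq_or_lt_of_le hik with rfl | hik'
      · exact lt_irrefl _ hlt
      · exact absurd (dE_lt_dE hik' (mem_range.1 hi)) (by omega)
    · rintro ⟨i, ⟨hik, hiS⟩, rfl⟩
      exact ⟨hiS, dE_lt_dE hik hk⟩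
  rw [rk, key, card_image_of_injOn (dE_injOn.mono ?_)]
  intro x hxx
  simp only [coe_filter, Set.mem_setOf_eq, mem_range, coe_range, Set.mem_Iio] at hxx ⊢
  omega

end

/-- the product of letters attached to a finset, for ℕ-indexed data -/
noncomputable def FS (l : ℕ) (s : ℕ → ℕ) (Q : ℕ → Polynomial ℚ) (S : Finset ℕ) : PowerSeries ℚ :=
  ∏ j : Fin l, letter (s (j : ℕ)) (Q (j : ℕ)) (dE S (j : ℕ))

/-- L1 : finite-sum formula for coefficients of `Zq`. -/
lemma coeff_Zq (l : ℕ) (s : ℕ → ℕ) (Q : ℕ → Polynomial ℚ) (hQ0 : 0 < l → (Q 0).coeff 0 = 0)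
    {m M : ℕ} (hmM : m ≤ M) :
    PowerSeries.coeff (R := ℚ) m (Zq l s Q) =
      ∑ S ∈ (Finset.Icc 1 M).powersetCard l, PowerSeries.coeff (R := ℚ) m (FS l s Q S) := by
  classical
  rw [Zq, PowerSeries.coeff_mk]
  set P : (Fin l → ℕ) → Prop := fun n => StrictAnti n ∧ ∀ i, 0 < n i with hP
  set 𝒮 : Finset {n : Fin l → ℕ // P n} :=
    (Fintype.piFinset fun _ : Fin l => Finset.Icc 1 M).subtype P with h𝒮
  have hvanish : ∀ n : {n : Fin l → ℕ // P n}, n ∉ 𝒮 →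
      PowerSeries.coeff (R := ℚ) m (∏ j : Fin l, letter (s (j : ℕ)) (Q (j : ℕ)) (n.1 j)) = 0 := by
    intro n hn
    rw [h𝒮, Finset.mem_subtype, Fintype.mem_piFinset] at hn
    push_neg at hn
    rcases hn with ⟨i, hi⟩
    rw [Finset.mem_Icc] at hi
    push_neg at hi
    have hpos := n.2.2 i
    have hbig : M < n.1 i := hi (by omega)
    have hmono : n.1 i ≤ n.1 ⟨0, i.pos⟩ := n.2.1.antitone (Fin.mk_le_of_le_val (by omega))
    have hdvd : (PowerSeries.X : PowerSeries ℚ) ^ (n.1 ⟨0, i.pos⟩) ∣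
        ∏ j : Fin l, letter (s (j : ℕ)) (Q (j : ℕ)) (n.1 j) :=
      dvd_trans (X_pow_dvd_letter (hQ0 i.pos))
        (Finset.dvd_prod_of_mem _ (Finset.mem_univ (⟨0, i.pos⟩ : Fin l)))
    exact PowerSeries.X_pow_dvd_iff.1 hdvd m (by omega)
  rw [tsum_eq_sum hvanish]
  have hjmem : ∀ S ∈ (Finset.Icc 1 M).powersetCard l, ∀ j : Fin l, dE S (j : ℕ) ∈ S := by
    intro S hS j
    rw [Finset.mem_powersetCard] at hS
    exact dE_mem (by rw [hS.2]; exact j.2)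
  refine Finset.sum_bij' (fun n _ => Finset.image n.1 Finset.univ)
    (fun S hS => ⟨fun j => dE S (j : ℕ),
      fun a b hab => dE_lt_dE hab (by rw [(Finset.mem_powersetCard.1 hS).2]; exact b.2),
      fun j => by
        show 0 < dE S (j : ℕ)
        have := (Finset.mem_Icc.1 ((Finset.mem_powersetCard.1 hS).1 (hjmem S hS j))).1
        omega⟩) ?_ ?_ ?_ ?_ ?_
  · -- hi : image ∈ powersetCard
    intro n hn
    rw [Finset.mem_powersetCard]
    rw [h𝒮, Finset.mem_subtype, Fintype.mem_piFinset] at hn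
    constructor
    · intro x hx
      rcases Finset.mem_image.1 hx with ⟨j, _, rfl⟩
      exact hn j
    · rw [Finset.card_image_of_injective _ n.2.1.injective, Finset.card_univ,
        Fintype.card_fin]
  · -- hj : tuple ∈ 𝒮
    intro S hS
    rw [h𝒮, Finset.mem_subtype, Fintype.mem_piFinset]
    intro j
    exact (Finset.mem_powersetCard.1 hS).1 (hjmem S hS j)
  · -- left inverse
    intro n hn
    exact Subtype.ext (funext fun j => dE_eq n.2.1 j)
  · -- right inverse
    intro S hS
    have hcard : S.card = l := (Finset.mem_powersetCard.1 hS).2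
    show Finset.image (fun j : Fin l => dE S (j : ℕ)) Finset.univ = S
    have himg : Finset.image (fun j : Fin l => dE S (j : ℕ)) Finset.univ
        = (Finset.range S.card).image (dE S) := by
      ext x
      simp only [Finset.mem_image, Finset.mem_univ, true_and, Finset.mem_range, hcard]
      constructor
      · rintro ⟨j, rfl⟩; exact ⟨j, j.2, rfl⟩
      · rintro ⟨j, hj, rfl⟩; exact ⟨⟨j, hj⟩, rfl⟩
    rw [himg, dE_image]
  · -- term equality
    intro n hn
    show _ = PowerSeries.coeff (R := ℚ) m (FS l s Q (Finset.image n.1 Finset.univ))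
    rw [FS]
    congr 1
    exact Finset.prod_congr rfl fun j _ => by rw [dE_eq n.2.1 j]

def cntl (e : ℕ → Bool × Bool) (k : ℕ) : ℕ :=
  ((Finset.range k).filter fun i => (e i).1 = true).card
def cntr (e : ℕ → Bool × Bool) (k : ℕ) : ℕ :=
  ((Finset.range k).filter fun i => (e i).2 = true).card

noncomputable def sM (s s' : ℕ → ℕ) (e : ℕ → Bool × Bool) (k : ℕ) : ℕ :=
  (if (e k).1 then s (cntl e k) else 0) + (if (e k).2 then s' (cntr e k) else 0)
noncomputable def QM (Q Q' : ℕ → Polynomial ℚ) (e : ℕ → Bool × Bool) (k : ℕ) : Polynomial ℚ :=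
  (if (e k).1 then Q (cntl e k) else 1) * (if (e k).2 then Q' (cntr e k) else 1)

/-- the merge pattern of a pair of finsets -/
noncomputable def mrg (S S' : Finset ℕ) : ℕ → Bool × Bool :=
  fun k => (decide (dE (S ∪ S') k ∈ S), decide (dE (S ∪ S') k ∈ S'))

lemma FS_eq_prod {l : ℕ} (s : ℕ → ℕ) (Q : ℕ → Polynomial ℚ) {S : Finset ℕ}
    (hS : S.card = l) :
    FS l s Q S = ∏ x ∈ S, letter (s (rk S x)) (Q (rk S x)) x := by
  classical
  subst hS
  rw [FS, Fin.prod_univ_eq_prod_range (fun j => letter (s j) (Q j) (dE S j)) S.card]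
  set f : ℕ → PowerSeries ℚ := fun x => letter (s (rk S x)) (Q (rk S x)) x with hf
  have h1 : ∏ x ∈ S, f x = ∏ j ∈ Finset.range S.card, f (dE S j) := by
    conv_lhs => rw [← dE_image (S := S)]
    exact Finset.prod_image (by simpa using dE_injOn (S := S))
  rw [h1]
  refine Finset.prod_congr rfl fun j hj => ?_
  rw [hf]
  simp only []
  rw [rk_dE (Finset.mem_range.1 hj)]

lemma FS_mul {l l' : ℕ} (s s' : ℕ → ℕ) (Q Q' : ℕ → Polynomial ℚ) {S S' : Finset ℕ}
    (hS : S.card = l) (hS' : S'.card = l') :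
    FS l s Q S * FS l' s' Q' S' =
      FS (S ∪ S').card (sM s s' (mrg S S')) (QM Q Q' (mrg S S')) (S ∪ S') := by
  classical
  rw [FS_eq_prod s Q hS, FS_eq_prod s' Q' hS',
    FS_eq_prod (sM s s' (mrg S S')) (QM Q Q' (mrg S S')) (rfl : (S ∪ S').card = _)]
  set T := S ∪ S' with hT
  set e := mrg S S' with he
  have hfac : ∀ x ∈ T, letter (sM s s' e (rk T x)) (QM Q Q' e (rk T x)) x
      = (if x ∈ S then letter (s (rk S x)) (Q (rk S x)) x else 1)
        * (if x ∈ S' then letter (s' (rk S' x)) (Q' (rk S' x)) x else 1) := by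
    intro x hx
    have hkT : rk T x < T.card := rk_lt_card hx
    have hde : dE T (rk T x) = x := dE_rk hx
    have he1 : (e (rk T x)).1 = decide (x ∈ S) := by rw [he]; unfold mrg; rw [← hT, hde]
    have he2 : (e (rk T x)).2 = decide (x ∈ S') := by rw [he]; unfold mrg; rw [← hT, hde]
    have hcl : cntl e (rk T x) = rk S x := by
      have h := rk_subset (S := S) (T := T) Finset.subset_union_left hkT
      rw [hde] at h
      rw [h, cntl]
      congr 1
      refine Finset.filter_congr fun i hi => ?_
      rw [he]; unfold mrg; rw [← hT]
      simp
    have hcr : cntr e (rk T x) = rk S' x := by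
      have h := rk_subset (S := S') (T := T) Finset.subset_union_right hkT
      rw [hde] at h
      rw [h, cntr]
      congr 1
      refine Finset.filter_congr fun i hi => ?_
      rw [he]; unfold mrg; rw [← hT]
      simp
    have hx' : x ∈ S ∨ x ∈ S' := by
      rw [hT, Finset.mem_union] at hx; exact hx
    by_cases h1 : x ∈ S <;> by_cases h2 : x ∈ S'
    · simp only [sM, QM, he1, he2, hcl, hcr, h1, h2, decide_true, if_true]
      rw [letter_mul]
    · simp [sM, QM, he1, he2, hcl, hcr, h1, h2]
    · simp [sM, QM, he1, he2, hcl, hcr, h1, h2]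
    · exact absurd hx' (by simp [h1, h2])
  rw [Finset.prod_congr rfl hfac, Finset.prod_mul_distrib]
  have key : ∀ (U : Finset ℕ) (hU : U ⊆ T) (f : ℕ → PowerSeries ℚ),
      ∏ x ∈ T, (if x ∈ U then f x else 1) = ∏ x ∈ U, f x := by
    intro U hU f
    rw [← Finset.prod_subset hU (fun x _ hxU => if_neg hxU)]
    exact Finset.prod_congr rfl fun x hx => if_pos hx
  rw [key S Finset.subset_union_left, key S' Finset.subset_union_right]

lemma coeff_Zq_mul {l l' : ℕ} {s s' : ℕ → ℕ} {Q Q' : ℕ → Polynomial ℚ}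
    (hQ0 : 0 < l → (Q 0).coeff 0 = 0) (hQ0' : 0 < l' → (Q' 0).coeff 0 = 0) (m : ℕ) :
    PowerSeries.coeff (R := ℚ) m (Zq l s Q * Zq l' s' Q') =
      ∑ SS ∈ (Finset.Icc 1 m).powersetCard l ×ˢ (Finset.Icc 1 m).powersetCard l',
        PowerSeries.coeff (R := ℚ) m (FS l s Q SS.1 * FS l' s' Q' SS.2) := by
  classical
  calc PowerSeries.coeff (R := ℚ) m (Zq l s Q * Zq l' s' Q')
      = ∑ p ∈ Finset.HasAntidiagonal.antidiagonal m, ∑ S ∈ (Finset.Icc 1 m).powersetCard l,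
          ∑ S' ∈ (Finset.Icc 1 m).powersetCard l',
            PowerSeries.coeff (R := ℚ) p.1 (FS l s Q S) * PowerSeries.coeff (R := ℚ) p.2 (FS l' s' Q' S') := by
        rw [PowerSeries.coeff_mul]
        refine Finset.sum_congr rfl fun p hp => ?_
        rw [Finset.HasAntidiagonal.mem_antidiagonal] at hp
        rw [coeff_Zq l s Q hQ0 (show p.1 ≤ m by omega),
          coeff_Zq l' s' Q' hQ0' (show p.2 ≤ m by omega), Finset.sum_mul_sum]
    _ = ∑ S ∈ (Finset.Icc 1 m).powersetCard l, ∑ S' ∈ (Finset.Icc 1 m).powersetCard l',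
          ∑ p ∈ Finset.HasAntidiagonal.antidiagonal m,
            PowerSeries.coeff (R := ℚ) p.1 (FS l s Q S) * PowerSeries.coeff (R := ℚ) p.2 (FS l' s' Q' S') := by
        rw [Finset.sum_comm]
        exact Finset.sum_congr rfl fun S _ => Finset.sum_comm
    _ = ∑ S ∈ (Finset.Icc 1 m).powersetCard l, ∑ S' ∈ (Finset.Icc 1 m).powersetCard l',
          PowerSeries.coeff (R := ℚ) m (FS l s Q S * FS l' s' Q' S') := by
        refine Finset.sum_congr rfl fun S _ => Finset.sum_congr rfl fun S' _ => ?_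
        rw [PowerSeries.coeff_mul]
    _ = _ := by rw [Finset.sum_product]

def eP (l l' : ℕ) (p : ℕ × (Fin (l + l') → Bool × Bool)) : ℕ → Bool × Bool :=
  fun k => if h : k < l + l' ∧ k < p.1 then p.2 ⟨k, h.1⟩ else (false, false)

def valid (l l' : ℕ) (p : ℕ × (Fin (l + l') → Bool × Bool)) : Prop :=
  p.1 ≤ l + l' ∧ (∀ k, k < p.1 → (eP l l' p k).1 = true ∨ (eP l l' p k).2 = true) ∧
    (∀ k : Fin (l + l'), p.1 ≤ (k : ℕ) → p.2 k = (false, false)) ∧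
    cntl (eP l l' p) p.1 = l ∧ cntr (eP l l' p) p.1 = l'

open Classical in
noncomputable def Cval (l l' : ℕ) : Finset (ℕ × (Fin (l + l') → Bool × Bool)) :=
  (Finset.range (l + l' + 1) ×ˢ Finset.univ).filter (valid l l')

lemma filter_image (T : Finset ℕ) (p : ℕ → Prop) [DecidablePred p] :
    ((Finset.range T.card).filter p).image (dE T) = T.filter (fun x => p (rk T x)) := by
  ext x
  simp only [Finset.mem_image, Finset.mem_filter, Finset.mem_range]
  constructor
  · rintro ⟨i, ⟨hi, hpi⟩, rfl⟩
    exact ⟨dE_mem hi, by rwa [rk_dE hi]⟩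
  · rintro ⟨hxT, hpx⟩
    exact ⟨rk T x, ⟨rk_lt_card hxT, hpx⟩, dE_rk hxT⟩

lemma card_filter_rk (T : Finset ℕ) (p : ℕ → Prop) [DecidablePred p] :
    (T.filter (fun x => p (rk T x))).card = ((Finset.range T.card).filter p).card := by
  rw [← filter_image, Finset.card_image_of_injOn (dE_injOn.mono (by
    intro x hx
    simp only [Finset.coe_filter, Set.mem_setOf_eq, Finset.mem_range, Finset.coe_range,
      Set.mem_Iio] at hx ⊢
    exact hx.1))]

lemma cntl_congr {e e' : ℕ → Bool × Bool} {k : ℕ} (h : ∀ i < k, e i = e' i) :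
    cntl e k = cntl e' k := by
  unfold cntl
  congr 1
  refine Finset.filter_congr fun i hi => ?_
  rw [h i (Finset.mem_range.1 hi)]

lemma cntr_congr {e e' : ℕ → Bool × Bool} {k : ℕ} (h : ∀ i < k, e i = e' i) :
    cntr e k = cntr e' k := by
  unfold cntr
  congr 1
  refine Finset.filter_congr fun i hi => ?_
  rw [h i (Finset.mem_range.1 hi)]

lemma cntl_mrg (S S' : Finset ℕ) : cntl (mrg S S') (S ∪ S').card = S.card := by
  classical
  unfold cntl
  have h1 : (Finset.range (S ∪ S').card).filter (fun i => (mrg S S' i).1 = true)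
      = (Finset.range (S ∪ S').card).filter (fun i => dE (S ∪ S') i ∈ S) := by
    refine Finset.filter_congr fun i _ => by simp [mrg]
  rw [h1, ← card_filter_rk]
  have h2 : (S ∪ S').filter (fun x => dE (S ∪ S') (rk (S ∪ S') x) ∈ S)
      = (S ∪ S').filter (fun x => x ∈ S) := by
    refine Finset.filter_congr fun x hx => by rw [dE_rk hx]
  rw [h2]
  congr 1
  ext x
  simp only [Finset.mem_filter, Finset.mem_union]
  tauto

lemma cntr_mrg (S S' : Finset ℕ) : cntr (mrg S S') (S ∪ S').card = S'.card := by
  classical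
  unfold cntr
  have h1 : (Finset.range (S ∪ S').card).filter (fun i => (mrg S S' i).2 = true)
      = (Finset.range (S ∪ S').card).filter (fun i => dE (S ∪ S') i ∈ S') := by
    refine Finset.filter_congr fun i _ => by simp [mrg]
  rw [h1, ← card_filter_rk]
  have h2 : (S ∪ S').filter (fun x => dE (S ∪ S') (rk (S ∪ S') x) ∈ S')
      = (S ∪ S').filter (fun x => x ∈ S') := by
    refine Finset.filter_congr fun x hx => by rw [dE_rk hx]
  rw [h2]
  congr 1
  ext x
  simp only [Finset.mem_filter, Finset.mem_union]
  tauto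

lemma FS_congr {l : ℕ} {s s' : ℕ → ℕ} {Q Q' : ℕ → Polynomial ℚ}
    (hs : ∀ a < l, s a = s' a) (hQ : ∀ a < l, Q a = Q' a) (S : Finset ℕ) :
    FS l s Q S = FS l s' Q' S := by
  unfold FS
  exact Finset.prod_congr rfl fun j _ => by rw [hs j j.2, hQ j j.2]

lemma Zq_congr {l : ℕ} {s s' : ℕ → ℕ} {Q Q' : ℕ → Polynomial ℚ}
    (hs : ∀ a < l, s a = s' a) (hQ : ∀ a < l, Q a = Q' a) :
    Zq l s Q = Zq l s' Q' := by
  refine PowerSeries.ext fun m => ?_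
  rw [Zq, Zq, PowerSeries.coeff_mk, PowerSeries.coeff_mk]
  refine tsum_congr fun n => ?_
  congr 1
  exact Finset.prod_congr rfl fun j _ => by rw [hs j j.2, hQ j j.2]

lemma sum_pairs_eq (l l' : ℕ) (s s' : ℕ → ℕ) (Q Q' : ℕ → Polynomial ℚ) (m : ℕ) :
    ∑ SS ∈ (Finset.Icc 1 m).powersetCard l ×ˢ (Finset.Icc 1 m).powersetCard l',
        PowerSeries.coeff (R := ℚ) m (FS l s Q SS.1 * FS l' s' Q' SS.2)
    = ∑ p ∈ Cval l l', ∑ T ∈ (Finset.Icc 1 m).powersetCard p.1,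
        PowerSeries.coeff (R := ℚ) m (FS p.1 (sM s s' (eP l l' p)) (QM Q Q' (eP l l' p)) T) := by
  classical
  -- the target reformulated as a sum over a filtered product finset
  set B : Finset ((ℕ × (Fin (l + l') → Bool × Bool)) × Finset ℕ) :=
    (Cval l l' ×ˢ (Finset.Icc 1 m).powerset).filter (fun pT => pT.2.card = pT.1.1) with hB
  have hBsum : ∑ pT ∈ B,
      PowerSeries.coeff (R := ℚ) m
        (FS pT.1.1 (sM s s' (eP l l' pT.1)) (QM Q Q' (eP l l' pT.1)) pT.2)
      = ∑ p ∈ Cval l l', ∑ T ∈ (Finset.Icc 1 m).powersetCard p.1,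
        PowerSeries.coeff (R := ℚ) m (FS p.1 (sM s s' (eP l l' p)) (QM Q Q' (eP l l' p)) T) := by
    rw [hB, Finset.sum_filter, Finset.sum_product]
    refine Finset.sum_congr rfl fun p _ => ?_
    rw [← Finset.sum_filter, powersetCard_eq_filter]
  rw [← hBsum]
  -- the forward map
  set F : Finset ℕ × Finset ℕ → (ℕ × (Fin (l + l') → Bool × Bool)) × Finset ℕ :=
    fun SS => (((SS.1 ∪ SS.2).card,
      fun k : Fin (l + l') => if (k : ℕ) < (SS.1 ∪ SS.2).card
        then mrg SS.1 SS.2 (k : ℕ) else (false, false)), SS.1 ∪ SS.2) with hF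
  -- the backward map
  set G : (ℕ × (Fin (l + l') → Bool × Bool)) × Finset ℕ → Finset ℕ × Finset ℕ :=
    fun pT => (pT.2.filter (fun x => (eP l l' pT.1 (rk pT.2 x)).1 = true),
      pT.2.filter (fun x => (eP l l' pT.1 (rk pT.2 x)).2 = true)) with hG
  have h_eP : ∀ S S' : Finset ℕ, S.card = l → S'.card = l' →
      ∀ k < (S ∪ S').card, eP l l' (F (S, S')).1 k = mrg S S' k := by
    intro S S' hcS hcS' k hk
    have hle : (S ∪ S').card ≤ l + l' := by
      calc (S ∪ S').card ≤ S.card + S'.card := Finset.card_union_le _ _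
        _ = l + l' := by rw [hcS, hcS']
    rw [eP]
    rw [dif_pos ⟨lt_of_lt_of_le hk hle, hk⟩]
    simp only [hF, if_pos hk]
  have hFvalid : ∀ S S' : Finset ℕ, S.card = l → S'.card = l' →
      valid l l' (F (S, S')).1 := by
    intro S S' hcS hcS'
    have hle : (S ∪ S').card ≤ l + l' := by
      calc (S ∪ S').card ≤ S.card + S'.card := Finset.card_union_le _ _
        _ = l + l' := by rw [hcS, hcS']
    refine ⟨hle, ?_, ?_, ?_, ?_⟩
    · intro k hk
      rw [h_eP S S' hcS hcS' k hk]
      have := dE_mem (S := S ∪ S') hk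
      rw [Finset.mem_union] at this
      rcases this with h | h
      · left; simp [mrg, h]
      · right; simp [mrg, h]
    · intro k hk
      have hk' : (S ∪ S').card ≤ (k : ℕ) := hk
      show (if (k : ℕ) < (S ∪ S').card then mrg S S' (k : ℕ) else (false, false))
        = (false, false)
      rw [if_neg (Nat.not_lt.2 hk')]
    · rw [cntl_congr (fun i hi => h_eP S S' hcS hcS' i hi), cntl_mrg, hcS]
    · rw [cntr_congr (fun i hi => h_eP S S' hcS hcS' i hi), cntr_mrg, hcS']
  refine Finset.sum_bij' (fun SS _ => F SS) (fun pT _ => G pT) ?_ ?_ ?_ ?_ ?_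
  · -- F maps into B
    intro SS hSS
    rw [Finset.mem_product, Finset.mem_powersetCard, Finset.mem_powersetCard] at hSS
    obtain ⟨⟨hsub1, hc1⟩, hsub2, hc2⟩ := hSS
    rw [hB, Finset.mem_filter, Finset.mem_product]
    refine ⟨⟨?_, ?_⟩, rfl⟩
    · rw [Cval, Finset.mem_filter, Finset.mem_product]
      refine ⟨⟨Finset.mem_range.2 ?_, Finset.mem_univ _⟩, hFvalid SS.1 SS.2 hc1 hc2⟩
      show (SS.1 ∪ SS.2).card < l + l' + 1
      have : (SS.1 ∪ SS.2).card ≤ l + l' := by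
        calc (SS.1 ∪ SS.2).card ≤ SS.1.card + SS.2.card := Finset.card_union_le _ _
          _ = l + l' := by rw [hc1, hc2]
      omega
    · exact Finset.mem_powerset.2 (Finset.union_subset hsub1 hsub2)
  · -- G maps into A
    intro pT hpT
    rw [hB, Finset.mem_filter, Finset.mem_product] at hpT
    obtain ⟨⟨hpC, hTpow⟩, hTcard⟩ := hpT
    rw [Cval, Finset.mem_filter] at hpC
    obtain ⟨-, hval⟩ := hpC
    rw [Finset.mem_product, Finset.mem_powersetCard, Finset.mem_powersetCard]
    have hTsub := Finset.mem_powerset.1 hTpow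
    constructor
    · refine ⟨subset_trans (Finset.filter_subset _ _) hTsub, ?_⟩
      rw [card_filter_rk pT.2 (fun i => (eP l l' pT.1 i).1 = true), hTcard]
      exact hval.2.2.2.1
    · refine ⟨subset_trans (Finset.filter_subset _ _) hTsub, ?_⟩
      rw [card_filter_rk pT.2 (fun i => (eP l l' pT.1 i).2 = true), hTcard]
      exact hval.2.2.2.2
  · -- left inverse
    intro SS hSS
    rw [Finset.mem_product, Finset.mem_powersetCard, Finset.mem_powersetCard] at hSS
    obtain ⟨⟨hsub1, hc1⟩, hsub2, hc2⟩ := hSS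
    have hleft : ∀ b : Bool, (SS.1 ∪ SS.2).filter
        (fun x => (if b then (eP l l' (F SS).1 (rk (SS.1 ∪ SS.2) x)).1
          else (eP l l' (F SS).1 (rk (SS.1 ∪ SS.2) x)).2) = true)
        = (if b then SS.1 else SS.2) := by
      intro b
      have step : ∀ x ∈ SS.1 ∪ SS.2,
          ((if b then (eP l l' (F SS).1 (rk (SS.1 ∪ SS.2) x)).1
            else (eP l l' (F SS).1 (rk (SS.1 ∪ SS.2) x)).2) = true)
          ↔ (x ∈ if b then SS.1 else SS.2) := by
        intro x hx
        have hrk : rk (SS.1 ∪ SS.2) x < (SS.1 ∪ SS.2).card := rk_lt_card hx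
        have := h_eP SS.1 SS.2 hc1 hc2 (rk (SS.1 ∪ SS.2) x) hrk
        have hde : dE (SS.1 ∪ SS.2) (rk (SS.1 ∪ SS.2) x) = x := dE_rk hx
        cases b <;> simp only [if_true, if_false, Bool.false_eq_true] <;>
          rw [show (SS.1, SS.2) = SS from rfl] at this <;> rw [this] <;>
          simp [mrg, hde]
      rw [Finset.filter_congr step]
      cases b <;>
        · ext x
          simp only [Finset.mem_filter, Finset.mem_union, if_true, if_false]
          constructor
          · tauto
          · intro h; exact ⟨by tauto, h⟩
    have h1 := hleft true
    have h2 := hleft false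
    simp only [if_true, if_false] at h1 h2
    rw [hG]
    show ((SS.1 ∪ SS.2).filter _, (SS.1 ∪ SS.2).filter _) = SS
    rw [Prod.ext_iff]
    exact ⟨h1, h2⟩
  · -- right inverse
    intro pT hpT
    rw [hB, Finset.mem_filter, Finset.mem_product] at hpT
    obtain ⟨⟨hpC, hTpow⟩, hTcard⟩ := hpT
    rw [Cval, Finset.mem_filter] at hpC
    obtain ⟨-, hval⟩ := hpC
    show F (G pT) = pT
    have hU : (G pT).1 ∪ (G pT).2 = pT.2 := by
      rw [hG]
      ext x
      simp only [Finset.mem_union, Finset.mem_filter]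
      constructor
      · rintro (⟨h, -⟩ | ⟨h, -⟩) <;> exact h
      · intro hx
        have hrk : rk pT.2 x < pT.1.1 := by rw [← hTcard]; exact rk_lt_card hx
        rcases hval.2.1 _ hrk with h | h
        · exact Or.inl ⟨hx, h⟩
        · exact Or.inr ⟨hx, h⟩
    rw [Prod.ext_iff]
    refine ⟨?_, hU⟩
    rw [Prod.ext_iff]
    constructor
    · show ((G pT).1 ∪ (G pT).2).card = pT.1.1
      rw [hU, hTcard]
    · show (fun k : Fin (l + l') => if (k : ℕ) < ((G pT).1 ∪ (G pT).2).card
          then mrg (G pT).1 (G pT).2 (k : ℕ) else (false, false)) = pT.1.2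
      funext k
      by_cases hk : (k : ℕ) < ((G pT).1 ∪ (G pT).2).card
      · rw [if_pos hk]
        have hkT : (k : ℕ) < pT.2.card := by rw [← hU]; exact hk
        have hmem : dE pT.2 (k : ℕ) ∈ pT.2 := dE_mem hkT
        have hrk : rk pT.2 (dE pT.2 (k : ℕ)) = (k : ℕ) := rk_dE hkT
        have heq : eP l l' pT.1 (k : ℕ) = pT.1.2 k := by
          rw [eP]
          rw [dif_pos ⟨k.2, by rw [← hTcard]; exact hkT⟩]
        show mrg (G pT).1 (G pT).2 (k : ℕ) = pT.1.2 k
        rw [mrg, hU]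
        have h1 : dE pT.2 (k : ℕ) ∈ (G pT).1 ↔ (pT.1.2 k).1 = true := by
          rw [hG]
          simp only [Finset.mem_filter]
          rw [hrk, heq]
          simp [hmem]
        have h2 : dE pT.2 (k : ℕ) ∈ (G pT).2 ↔ (pT.1.2 k).2 = true := by
          rw [hG]
          simp only [Finset.mem_filter]
          rw [hrk, heq]
          simp [hmem]
        rw [Prod.ext_iff]
        constructor
        · show decide (dE pT.2 (k : ℕ) ∈ (G pT).1) = (pT.1.2 k).1
          cases hb : (pT.1.2 k).1
          · simp [h1, hb]
          · simp [h1, hb]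
        · show decide (dE pT.2 (k : ℕ) ∈ (G pT).2) = (pT.1.2 k).2
          cases hb : (pT.1.2 k).2
          · simp [h2, hb]
          · simp [h2, hb]
      · rw [if_neg hk]
        rw [hU] at hk
        have hle : pT.1.1 ≤ (k : ℕ) := by rw [← hTcard]; omega
        exact (hval.2.2.1 k hle).symm

  · -- term equality
    intro SS hSS
    rw [Finset.mem_product, Finset.mem_powersetCard, Finset.mem_powersetCard] at hSS
    obtain ⟨⟨hsub1, hc1⟩, hsub2, hc2⟩ := hSS
    show PowerSeries.coeff (R := ℚ) m (FS l s Q SS.1 * FS l' s' Q' SS.2)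
      = PowerSeries.coeff (R := ℚ) m (FS (F SS).1.1 (sM s s' (eP l l' (F SS).1))
          (QM Q Q' (eP l l' (F SS).1)) (F SS).2)
    congr 1
    rw [FS_mul s s' Q Q' hc1 hc2]
    have hePa : ∀ k < (SS.1 ∪ SS.2).card, eP l l' (F SS).1 k = mrg SS.1 SS.2 k := by
      intro k hk
      exact h_eP SS.1 SS.2 hc1 hc2 k hk
    refine FS_congr (fun a ha => ?_) (fun a ha => ?_) _
    · rw [sM, sM, hePa a ha,
        cntl_congr (fun i hi => hePa i (lt_trans hi ha)),
        cntr_congr (fun i hi => hePa i (lt_trans hi ha))]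
    · rw [QM, QM, hePa a ha,
        cntl_congr (fun i hi => hePa i (lt_trans hi ha)),
        cntr_congr (fun i hi => hePa i (lt_trans hi ha))]

lemma cntl_pos {e : ℕ → Bool × Bool} {k K : ℕ} (hk : k < K) (hf : (e k).1 = true) :
    0 < cntl e K :=
  Finset.card_pos.2 ⟨k, Finset.mem_filter.2 ⟨Finset.mem_range.2 hk, hf⟩⟩

lemma cntr_pos {e : ℕ → Bool × Bool} {k K : ℕ} (hk : k < K) (hf : (e k).2 = true) :
    0 < cntr e K :=
  Finset.card_pos.2 ⟨k, Finset.mem_filter.2 ⟨Finset.mem_range.2 hk, hf⟩⟩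

lemma cntl_lt {e : ℕ → Bool × Bool} {k K : ℕ} (hk : k < K) (hf : (e k).1 = true) :
    cntl e k < cntl e K := by
  refine Finset.card_lt_card ⟨Finset.filter_subset_filter _
    (Finset.range_subset_range.2 (le_of_lt hk)), fun hsub => ?_⟩
  have : k ∈ (Finset.range k).filter (fun i => (e i).1 = true) :=
    hsub (Finset.mem_filter.2 ⟨Finset.mem_range.2 hk, hf⟩)
  simp at this

lemma cntr_lt {e : ℕ → Bool × Bool} {k K : ℕ} (hk : k < K) (hf : (e k).2 = true) :
    cntr e k < cntr e K := by
  refine Finset.card_lt_card ⟨Finset.filter_subset_filter _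
    (Finset.range_subset_range.2 (le_of_lt hk)), fun hsub => ?_⟩
  have : k ∈ (Finset.range k).filter (fun i => (e i).2 = true) :=
    hsub (Finset.mem_filter.2 ⟨Finset.mem_range.2 hk, hf⟩)
  simp at this

lemma cntl_zero (e : ℕ → Bool × Bool) : cntl e 0 = 0 := by simp [cntl]
lemma cntr_zero (e : ℕ → Bool × Bool) : cntr e 0 = 0 := by simp [cntr]

lemma mem_Cval {l l' : ℕ} {p : ℕ × (Fin (l + l') → Bool × Bool)} (hp : p ∈ Cval l l') :
    valid l l' p := by
  classical
  rw [Cval, Finset.mem_filter] at hp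
  exact hp.2

/-- behaviour of eP at indices below p.1, for valid p. -/
lemma eP_lt {l l' : ℕ} {p : ℕ × (Fin (l + l') → Bool × Bool)} (hval : valid l l' p)
    {k : ℕ} (hk : k < p.1) : eP l l' p k = p.2 ⟨k, lt_of_lt_of_le hk hval.1⟩ := by
  rw [eP, dif_pos ⟨lt_of_lt_of_le hk hval.1, hk⟩]

lemma QM_coeff_zero {l l' : ℕ} {Q Q' : ℕ → Polynomial ℚ}
    {p : ℕ × (Fin (l + l') → Bool × Bool)} (hval : valid l l' p)
    (hQ0 : 0 < l → (Q 0).coeff 0 = 0) (hQ0' : 0 < l' → (Q' 0).coeff 0 = 0)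
    (hp : 0 < p.1) : (QM Q Q' (eP l l' p) 0).coeff 0 = 0 := by
  rw [QM, Polynomial.mul_coeff_zero, cntl_zero, cntr_zero]
  rcases hval.2.1 0 hp with hf | hf
  · rw [if_pos hf, hQ0 (by
      have := cntl_pos hp hf
      rw [hval.2.2.2.1] at this
      exact this)]
    ring
  · rw [if_pos hf, hQ0' (by
      have := cntr_pos hp hf
      rw [hval.2.2.2.2] at this
      exact this)]
    by_cases hf1 : (eP l l' p 0).1 = true
    · rw [if_pos hf1]; ring
    · rw [if_neg hf1]; ring

lemma Zq_mul {l l' : ℕ} {s s' : ℕ → ℕ} {Q Q' : ℕ → Polynomial ℚ}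
    (hQ0 : 0 < l → (Q 0).coeff 0 = 0) (hQ0' : 0 < l' → (Q' 0).coeff 0 = 0) :
    Zq l s Q * Zq l' s' Q' =
      ∑ p ∈ Cval l l', Zq p.1 (sM s s' (eP l l' p)) (QM Q Q' (eP l l' p)) := by
  refine PowerSeries.ext fun m => ?_
  rw [coeff_Zq_mul hQ0 hQ0' m, sum_pairs_eq l l' s s' Q Q' m, map_sum]
  refine Finset.sum_congr rfl fun p hp => ?_
  rw [coeff_Zq p.1 _ _ (fun h0 => QM_coeff_zero (mem_Cval hp) hQ0 hQ0' h0) le_rfl]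

lemma merged_k {d l l' : ℕ} {s : Fin l → ℕ} {s' : Fin l' → ℕ}
    {Q : Fin l → Polynomial ℚ} {Q' : Fin l' → Polynomial ℚ}
    (hs1 : ∀ j, 1 ≤ s j) (hs1' : ∀ j, 1 ≤ s' j)
    (hdeg : ∀ j, Q j = 0 ∨ (Q j).natDegree + d ≤ s j)
    (hdeg' : ∀ j, Q' j = 0 ∨ (Q' j).natDegree + d ≤ s' j)
    {p : ℕ × (Fin (l + l') → Bool × Bool)} (hval : valid l l' p) {k : ℕ} (hk : k < p.1) :
    1 ≤ sM (extS l s) (extS l' s') (eP l l' p) k ∧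
      (QM (extQ l Q) (extQ l' Q') (eP l l' p) k = 0 ∨
        (QM (extQ l Q) (extQ l' Q') (eP l l' p) k).natDegree + d
          ≤ sM (extS l s) (extS l' s') (eP l l' p) k) := by
  have hor := hval.2.1 k hk
  have hcl : (eP l l' p k).1 = true → cntl (eP l l' p) k < l := fun hf => by
    have := cntl_lt hk hf
    rwa [hval.2.2.2.1] at this
  have hcr : (eP l l' p k).2 = true → cntr (eP l l' p) k < l' := fun hf => by
    have := cntr_lt hk hf
    rwa [hval.2.2.2.2] at this
  by_cases hf1 : (eP l l' p k).1 = true <;> by_cases hf2 : (eP l l' p k).2 = true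
  · -- both
    have ha := hcl hf1
    have hb := hcr hf2
    rw [sM, QM, if_pos hf1, if_pos hf1, if_pos hf2, if_pos hf2, extS, extQ, extS, extQ,
      dif_pos ha, dif_pos ha, dif_pos hb, dif_pos hb]
    constructor
    · have := hs1 ⟨cntl (eP l l' p) k, ha⟩
      omega
    · by_cases hQa : Q ⟨cntl (eP l l' p) k, ha⟩ = 0
      · left; rw [hQa, zero_mul]
      by_cases hQb : Q' ⟨cntr (eP l l' p) k, hb⟩ = 0
      · left; rw [hQb, mul_zero]
      right
      rw [Polynomial.natDegree_mul hQa hQb]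
      have h1 := (hdeg ⟨cntl (eP l l' p) k, ha⟩).resolve_left hQa
      have h2 := (hdeg' ⟨cntr (eP l l' p) k, hb⟩).resolve_left hQb
      omega
  · have ha := hcl hf1
    rw [sM, QM, if_pos hf1, if_pos hf1, if_neg hf2, if_neg hf2, extS, extQ,
      dif_pos ha, dif_pos ha, mul_one, add_zero]
    exact ⟨hs1 _, hdeg _⟩
  · have hb := hcr hf2
    rw [sM, QM, if_neg hf1, if_neg hf1, if_pos hf2, if_pos hf2, extS, extQ,
      dif_pos hb, dif_pos hb, one_mul, zero_add]
    exact ⟨hs1' _, hdeg' _⟩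
  · exact absurd hor (by simp [hf1, hf2])

lemma Zq_eq_zetaQ_merged {l l' : ℕ} (s s' : ℕ → ℕ) (Q Q' : ℕ → Polynomial ℚ)
    (p : ℕ × (Fin (l + l') → Bool × Bool)) :
    Zq p.1 (sM s s' (eP l l' p)) (QM Q Q' (eP l l' p)) =
      zetaQ p.1 (fun k : Fin p.1 => sM s s' (eP l l' p) (k : ℕ))
        (fun k : Fin p.1 => QM Q Q' (eP l l' p) (k : ℕ)) := by
  rw [zetaQ_eq_Zq]
  refine Zq_congr (fun a ha => ?_) (fun a ha => ?_)
  · rw [extS, dif_pos ha]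
  · rw [extQ, dif_pos ha]

lemma zetaQ_nil (s : Fin 0 → ℕ) (Q : Fin 0 → Polynomial ℚ) : zetaQ 0 s Q = 1 := by
  haveI : Unique {n : Fin 0 → ℕ // StrictAnti n ∧ ∀ i, 0 < n i} :=
    ⟨⟨⟨Fin.elim0, fun a => a.elim0, fun i => i.elim0⟩⟩,
      fun a => Subtype.ext (funext fun i => i.elim0)⟩
  refine PowerSeries.ext fun m => ?_
  rw [zetaQ, PowerSeries.coeff_mk, tsum_eq_single default (fun b hb =>
    absurd (Subsingleton.elim b default) hb)]
  simp

lemma gen_mul {l l' : ℕ} (s : Fin l → ℕ) (s' : Fin l' → ℕ)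
    (Q : Fin l → Polynomial ℚ) (Q' : Fin l' → Polynomial ℚ)
    (hc : ∀ h : 0 < l, (Q ⟨0, h⟩).coeff 0 = 0) (hc' : ∀ h : 0 < l', (Q' ⟨0, h⟩).coeff 0 = 0) :
    zetaQ l s Q * zetaQ l' s' Q' =
      ∑ p ∈ Cval l l',
        zetaQ p.1 (fun k : Fin p.1 => sM (extS l s) (extS l' s') (eP l l' p) (k : ℕ))
          (fun k : Fin p.1 => QM (extQ l Q) (extQ l' Q') (eP l l' p) (k : ℕ)) := by
  have h1 : 0 < l → (extQ l Q 0).coeff 0 = 0 := fun hl => by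
    rw [extQ, dif_pos hl]; exact hc hl
  have h2 : 0 < l' → (extQ l' Q' 0).coeff 0 = 0 := fun hl => by
    rw [extQ, dif_pos hl]; exact hc' hl
  rw [zetaQ_eq_Zq, zetaQ_eq_Zq, Zq_mul h1 h2]
  exact Finset.sum_congr rfl fun p _ => Zq_eq_zetaQ_merged _ _ _ _ p

/-- Z_q[d]: the ℚ-span of the ζ_q(s_1,…,s_l;Q_1,…,Q_l) with l ≥ 0, all s_j ≥ 1,
deg Q_j ≤ s_j − d (i.e. Q_j = 0 or natDegree Q_j + d ≤ s_j) and Q_1 ∈ tℚ[t]. -/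
noncomputable def ZqD (d : ℕ) : Submodule ℚ (PowerSeries ℚ) :=
  Submodule.span ℚ {f | ∃ (l : ℕ) (s : Fin l → ℕ) (Q : Fin l → Polynomial ℚ),
    (∀ j, 1 ≤ s j) ∧ (∀ j, Q j = 0 ∨ (Q j).natDegree + d ≤ s j) ∧
    (∀ h : 0 < l, (Q ⟨0, h⟩).coeff 0 = 0) ∧ f = zetaQ l s Q}

/-- Z_q°[d]: as Z_q[d], but with all Q_j ∈ tℚ[t]. -/
noncomputable def ZqcD (d : ℕ) : Submodule ℚ (PowerSeries ℚ) :=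
  Submodule.span ℚ {f | ∃ (l : ℕ) (s : Fin l → ℕ) (Q : Fin l → Polynomial ℚ),
    (∀ j, 1 ≤ s j) ∧ (∀ j, Q j = 0 ∨ (Q j).natDegree + d ≤ s j) ∧
    (∀ j, (Q j).coeff 0 = 0) ∧ f = zetaQ l s Q}

/-- For every d ≥ 0 the spaces Z_q[d] and Z_q°[d] are closed under multiplication and
contain 1; in particular Z_q = Z_q[0] and Z_q° = Z_q°[0] are ℚ-subalgebras of ℚ[[q]]. -/
theorem ZqD_ZqcD_mul_closed :
    (∀ d : ℕ, ∀ f g : PowerSeries ℚ, f ∈ ZqD d → g ∈ ZqD d → f * g ∈ ZqD d) ∧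
    (∀ d : ℕ, ∀ f g : PowerSeries ℚ, f ∈ ZqcD d → g ∈ ZqcD d → f * g ∈ ZqcD d) ∧
    (∀ d : ℕ, (1 : PowerSeries ℚ) ∈ ZqD d ∧ (1 : PowerSeries ℚ) ∈ ZqcD d) := by
  have hone : ∀ d : ℕ, (1 : PowerSeries ℚ) ∈ ZqD d ∧ (1 : PowerSeries ℚ) ∈ ZqcD d := by
    intro d
    constructor
    · exact Submodule.subset_span ⟨0, Fin.elim0, Fin.elim0, fun j => j.elim0,
        fun j => j.elim0, fun h => absurd h (by omega), (zetaQ_nil _ _).symm⟩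
    · exact Submodule.subset_span ⟨0, Fin.elim0, Fin.elim0, fun j => j.elim0,
        fun j => j.elim0, fun j => j.elim0, (zetaQ_nil _ _).symm⟩
  refine ⟨?_, ?_, hone⟩
  · -- ZqD closed under multiplication
    intro d f g hf hg
    refine Submodule.span_induction₂ (p := fun x y _ _ => x * y ∈ ZqD d)
      ?_ ?_ ?_ ?_ ?_ ?_ ?_ hf hg
    · rintro x y ⟨l, s, Q, hs1, hdeg, hc, rfl⟩ ⟨l', s', Q', hs1', hdeg', hc', rfl⟩
      rw [gen_mul s s' Q Q' hc hc']
      refine Submodule.sum_mem _ fun p hp => Submodule.subset_span ?_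
      have hval := mem_Cval hp
      refine ⟨p.1, _, _, fun k => (merged_k hs1 hs1' hdeg hdeg' hval k.2).1,
        fun k => (merged_k hs1 hs1' hdeg hdeg' hval k.2).2, ?_, rfl⟩
      intro h
      exact QM_coeff_zero hval
        (fun hl => by rw [extQ, dif_pos hl]; exact hc hl)
        (fun hl => by rw [extQ, dif_pos hl]; exact hc' hl) h
    · intro y _; rw [zero_mul]; exact Submodule.zero_mem _
    · intro x _; rw [mul_zero]; exact Submodule.zero_mem _
    · intro x y z _ _ _ h1 h2; rw [add_mul]; exact Submodule.add_mem _ h1 h2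
    · intro x y z _ _ _ h1 h2; rw [mul_add]; exact Submodule.add_mem _ h1 h2
    · intro r x y _ _ h; rw [smul_mul_assoc]; exact Submodule.smul_mem _ _ h
    · intro r x y _ _ h; rw [mul_smul_comm]; exact Submodule.smul_mem _ _ h
  · -- ZqcD closed under multiplication
    intro d f g hf hg
    refine Submodule.span_induction₂ (p := fun x y _ _ => x * y ∈ ZqcD d)
      ?_ ?_ ?_ ?_ ?_ ?_ ?_ hf hg
    · rintro x y ⟨l, s, Q, hs1, hdeg, hc, rfl⟩ ⟨l', s', Q', hs1', hdeg', hc', rfl⟩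
      rw [gen_mul s s' Q Q' (fun h => hc ⟨0, h⟩) (fun h => hc' ⟨0, h⟩)]
      refine Submodule.sum_mem _ fun p hp => Submodule.subset_span ?_
      have hval := mem_Cval hp
      refine ⟨p.1, _, _, fun k => (merged_k hs1 hs1' hdeg hdeg' hval k.2).1,
        fun k => (merged_k hs1 hs1' hdeg hdeg' hval k.2).2, ?_, rfl⟩
      intro k
      rw [QM, Polynomial.mul_coeff_zero]
      by_cases hf1 : (eP l l' p (k : ℕ)).1 = true
      · rw [if_pos hf1, extQ, dif_pos (by
          have := cntl_lt k.2 hf1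
          rwa [hval.2.2.2.1] at this), hc _]
        ring
      · rcases hval.2.1 (k : ℕ) k.2 with h | h
        · exact absurd h hf1
        · rw [if_pos h, if_neg hf1, extQ, dif_pos (by
            have := cntr_lt k.2 h
            rwa [hval.2.2.2.2] at this), hc' _]
          ring
    · intro y _; rw [zero_mul]; exact Submodule.zero_mem _
    · intro x _; rw [mul_zero]; exact Submodule.zero_mem _
    · intro x y z _ _ _ h1 h2; rw [add_mul]; exact Submodule.add_mem _ h1 h2
    · intro x y z _ _ _ h1 h2; rw [mul_add]; exact Submodule.add_mem _ h1 h2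
    · intro r x y _ _ h; rw [smul_mul_assoc]; exact Submodule.smul_mem _ _ h
    · intro r x y _ _ h; rw [mul_smul_comm]; exact Submodule.smul_mem _ _ h
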